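/- In the nef-partition setting, let σ* be a proper face of Δ* with dual face σ = {m ∈ Δ | ⟨m,n⟩ = -1 for all n ∈ σ*}, and suppose σ̌ = σ₁* + ⋯ + σ_r* is nonempty. Then σ = σ̌₁* + ⋯ + σ̌_r*, where σ̌* = {m ∈ ∇* | ⟨m,n⟩ = -1 for all n ∈ σ̌} and σ̌_i* = {m ∈ σ̌* | φ̌_i(m) = 1}. -/

import Mathlib

open scoped Pointwise

namespace BB

abbrev V (n : ℕ) : Type := Fin n → ℝ

/-- The standard pairing between `M_ℝ` and `N_ℝ` (both identified with `ℝⁿ`). -/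
def pair {n : ℕ} (m v : V n) : ℝ := ∑ i, m i * v i

/-- A point of `ℝⁿ` is a lattice point if all its coordinates are integers. -/
def IsLatticePt {n : ℕ} (m : V n) : Prop := ∀ i, ∃ z : ℤ, m i = (z : ℝ)

/-- A lattice polytope: convex hull of finitely many lattice points. -/
def IsLatticePolytope {n : ℕ} (P : Set (V n)) : Prop :=
  ∃ S : Finset (V n), (∀ m ∈ S, IsLatticePt m) ∧ P = convexHull ℝ (S : Set (V n))

/-- The polar dual `P* = {v | ⟨m,v⟩ ≥ -1 for all m ∈ P}`. -/
def polar {n : ℕ} (P : Set (V n)) : Set (V n) := {v | ∀ m ∈ P, -1 ≤ pair m v}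

/-- A reflexive polytope: a lattice polytope with `0` in its interior whose polar
dual is again a lattice polytope. -/
def IsReflexive {n : ℕ} (P : Set (V n)) : Prop :=
  IsLatticePolytope P ∧ (0 : V n) ∈ interior P ∧ IsLatticePolytope (polar P)

/-- The support function `supp P v = -inf{⟨m,v⟩ | m ∈ P}`; for `P = Δᵢ` and `v ∈ N_ℝ`
this is the piecewise linear function `φᵢ(v)` of the nef-partition. -/
noncomputable def supp {n : ℕ} (P : Set (V n)) (v : V n) : ℝ :=
  sSup ((fun m => -(pair m v)) '' P)

end BB


namespace BB

variable {n : ℕ}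

lemma pair_comm (m v : V n) : pair m v = pair v m := by
  simp [pair, mul_comm]

lemma pair_add_left (a b v : V n) : pair (a + b) v = pair a v + pair b v := by
  simp [pair, add_mul, Finset.sum_add_distrib]

lemma pair_smul_left (c : ℝ) (a v : V n) : pair (c • a) v = c * pair a v := by
  simp [pair, Finset.mul_sum, mul_assoc]

@[simp] lemma pair_zero_left (v : V n) : pair 0 v = 0 := by simp [pair]

@[simp] lemma pair_zero_right (v : V n) : pair v 0 = 0 := by simp [pair]

lemma pair_sum_left {ι : Type*} (s : Finset ι) (f : ι → V n) (v : V n) :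
    pair (∑ i ∈ s, f i) v = ∑ i ∈ s, pair (f i) v := by
  classical
  induction s using Finset.induction with
  | empty => simp
  | @insert a s h ih => rw [Finset.sum_insert h, pair_add_left, ih, Finset.sum_insert h]

lemma isLinearMap_pair_left (v : V n) : IsLinearMap ℝ (fun m : V n => pair m v) :=
  ⟨fun a b => pair_add_left a b v, fun c a => pair_smul_left c a v⟩

lemma continuous_pair_left (v : V n) : Continuous fun m : V n => pair m v := by
  unfold pair
  exact continuous_finset_sum _ fun i _ => (continuous_apply i).mul continuous_const

lemma continuous_pair_right (m : V n) : Continuous fun v : V n => pair m v := by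
  simp only [fun v => pair_comm m v]
  exact continuous_pair_left m

lemma neg_pair_le_supp {P : Set (V n)} (hP : IsCompact P) {m : V n} (hm : m ∈ P) (v : V n) :
    -(pair m v) ≤ supp P v :=
  le_csSup ((hP.image (continuous_pair_left v).neg).bddAbove) ⟨m, hm, rfl⟩

lemma supp_le {P : Set (V n)} (hne : P.Nonempty) {v : V n} {c : ℝ}
    (h : ∀ m ∈ P, -(pair m v) ≤ c) : supp P v ≤ c :=
  csSup_le (hne.image _) (by rintro x ⟨m, hm, rfl⟩; exact h m hm)

lemma exists_supp_eq {P : Set (V n)} (hP : IsCompact P) (hne : P.Nonempty) (v : V n) :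
    ∃ m ∈ P, supp P v = -(pair m v) := by
  have h := (hP.image (continuous_pair_left v).neg).sSup_mem (hne.image _)
  obtain ⟨m, hm, hh⟩ := h
  exact ⟨m, hm, hh.symm⟩

lemma supp_add {A B : Set (V n)} (hA : IsCompact A) (hAne : A.Nonempty)
    (hB : IsCompact B) (hBne : B.Nonempty) (v : V n) :
    supp (A + B) v = supp A v + supp B v := by
  apply le_antisymm
  · apply supp_le (hAne.add hBne)
    rintro m ⟨a, ha, b, hb, rfl⟩
    have h1 := neg_pair_le_supp hA ha v
    have h2 := neg_pair_le_supp hB hb v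
    rw [pair_add_left]; linarith
  · obtain ⟨a, ha, hA'⟩ := exists_supp_eq hA hAne v
    obtain ⟨b, hb, hB'⟩ := exists_supp_eq hB hBne v
    have hmem : a + b ∈ A + B := Set.add_mem_add ha hb
    have := neg_pair_le_supp (hA.add hB) hmem v
    rw [pair_add_left] at this; linarith

lemma isCompact_finsetSum {ι : Type*} (s : Finset ι) (P : ι → Set (V n))
    (h : ∀ i ∈ s, IsCompact (P i)) : IsCompact (∑ i ∈ s, P i) := by
  classical
  induction s using Finset.induction with
  | empty =>
      simp only [Finset.sum_empty]
      have : (0 : Set (V n)) = {0} := rfl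
      rw [this]; exact isCompact_singleton
  | @insert a s ha ih =>
      rw [Finset.sum_insert ha]
      exact (h a (Finset.mem_insert_self _ _)).add
        (ih fun i hi => h i (Finset.mem_insert_of_mem hi))

lemma nonempty_finsetSum {ι : Type*} (s : Finset ι) (P : ι → Set (V n))
    (h : ∀ i ∈ s, (P i).Nonempty) : (∑ i ∈ s, P i).Nonempty := by
  classical
  induction s using Finset.induction with
  | empty => exact ⟨0, by simp [Finset.sum_empty, Set.mem_zero]⟩
  | @insert a s ha ih =>
      rw [Finset.sum_insert ha]
      exact (h a (Finset.mem_insert_self _ _)).add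
        (ih fun i hi => h i (Finset.mem_insert_of_mem hi))

lemma supp_finsetSum {ι : Type*} (s : Finset ι) (P : ι → Set (V n))
    (hc : ∀ i ∈ s, IsCompact (P i)) (hne : ∀ i ∈ s, (P i).Nonempty) (v : V n) :
    supp (∑ i ∈ s, P i) v = ∑ i ∈ s, supp (P i) v := by
  classical
  induction s using Finset.induction with
  | empty =>
      simp only [Finset.sum_empty]
      have h0 : ((fun m => -(pair m v)) '' (0 : Set (V n))) = {0} := by
        ext x; simp [Set.mem_zero]
      simp [supp, h0]
  | @insert a s ha ih =>
      rw [Finset.sum_insert ha, Finset.sum_insert ha,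
        supp_add (hc a (Finset.mem_insert_self _ _))
          (hne a (Finset.mem_insert_self _ _))
          (isCompact_finsetSum s P fun i hi => hc i (Finset.mem_insert_of_mem hi))
          (nonempty_finsetSum s P fun i hi => hne i (Finset.mem_insert_of_mem hi)),
        ih (fun i hi => hc i (Finset.mem_insert_of_mem hi))
          (fun i hi => hne i (Finset.mem_insert_of_mem hi))]

lemma hull_pair_ge {S : Set (V n)} {v : V n} {c : ℝ}
    (h : ∀ x ∈ S, c ≤ pair x v) : ∀ x ∈ convexHull ℝ S, c ≤ pair x v :=
  fun _ hx => convexHull_min h (convex_halfSpace_ge (isLinearMap_pair_left v) c) hx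

lemma polar_isClosed (P : Set (V n)) : IsClosed (polar P) := by
  have h : polar P = ⋂ m ∈ P, {v | -1 ≤ pair m v} := by
    ext v; simp [polar]
  rw [h]
  exact isClosed_biInter fun m _ => isClosed_le continuous_const (continuous_pair_right m)

lemma polar_convex (P : Set (V n)) : Convex ℝ (polar P) := by
  intro x hx y hy a b ha hb hab m hm
  have h1 := hx m hm
  have h2 := hy m hm
  have : pair m (a • x + b • y) = a * pair m x + b * pair m y := by
    rw [pair_comm, pair_add_left, pair_smul_left, pair_smul_left, pair_comm x m, pair_comm y m]
  rw [this]
  nlinarith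

lemma zero_mem_polar (P : Set (V n)) : (0 : V n) ∈ polar P := fun m _ => by simp

lemma bipolar {P : Set (V n)} (hconv : Convex ℝ P) (hcl : IsClosed P) (h0 : (0 : V n) ∈ P) :
    polar (polar P) = P := by
  apply Set.Subset.antisymm
  · intro x hx
    by_contra hxP
    obtain ⟨f, u, hfa, hux⟩ := geometric_hahn_banach_closed_point hconv hcl hxP
    have hu0 : 0 < u := by simpa using hfa 0 h0
    set w : V n := fun j => -(1 / u) * f (Pi.single j 1) with hw
    have hpw : ∀ a : V n, pair a w = -(1 / u) * f a := by
      intro a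
      have ha : a = ∑ j, (a j) • (Pi.single j 1 : V n) := by
        ext k
        rw [Finset.sum_apply]
        simp [Pi.single_apply]
      calc pair a w = ∑ j, a j * (-(1 / u) * f (Pi.single j 1)) := rfl
        _ = -(1 / u) * ∑ j, a j * f (Pi.single j 1) := by
            rw [Finset.mul_sum]; congr 1; ext j; ring
        _ = -(1 / u) * f a := by
            congr 1
            conv_rhs => rw [ha]
            rw [map_sum]
            congr 1; ext j
            rw [f.map_smul, smul_eq_mul]
    have hwP : w ∈ polar P := by
      intro m hm
      rw [hpw]
      have := hfa m hm
      rw [neg_mul, le_neg]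
      rw [div_mul_eq_mul_div, one_mul, div_le_iff₀ hu0]
      linarith
    have := hx w hwP
    rw [pair_comm, hpw] at this
    have h1 : (1 / u) * f x ≤ 1 := by linarith
    have h2 : f x ≤ u := by
      have h3 := mul_le_mul_of_nonneg_left h1 (le_of_lt hu0)
      rw [mul_one] at h3
      rwa [← mul_assoc, mul_one_div, div_self (ne_of_gt hu0), one_mul] at h3
    linarith
  · intro x hxP m hm
    rw [pair_comm]
    exact hm x hxP



/-- `F` is a face of the convex set `P` (an exposed subset). -/
def IsFaceOf {n : ℕ} (F P : Set (V n)) : Prop := IsExposed ℝ P F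

theorem stmt3 {n r : ℕ} (Δ : Set (V n)) (D : Fin r → Set (V n))
    (hΔrefl : IsReflexive Δ)
    (hDlat : ∀ i, IsLatticePolytope (D i))
    (hΔ : Δ = ∑ i, D i)
    (E : Finset (V n))
    (hE : (E : Set (V n)) = Set.extremePoints ℝ (polar Δ))
    (hnef : ∀ i, ∀ e ∈ E, supp (D i) e = 0 ∨ supp (D i) e = 1)
    (Nb : Fin r → Set (V n))
    (hNb : ∀ i, Nb i = convexHull ℝ ({0} ∪ {e : V n | e ∈ E ∧ supp (D i) e = 1}))
    -- a proper face σ* of Δ*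
    (σs : Set (V n))
    (hface : IsFaceOf σs (polar Δ))
    (hproper : σs ≠ polar Δ)
    -- σ̌ = σ₁* + ⋯ + σ_r*, assumed nonempty
    (chk : Set (V n))
    (hchkdef : chk = ∑ i, {v ∈ σs | supp (D i) v = 1})
    (hchkne : chk.Nonempty)
    -- σ̌* = {m ∈ ∇* | ⟨m,n⟩ = -1 for all n ∈ σ̌}
    (chks : Set (V n))
    (hchks : chks = {m ∈ polar (∑ i, Nb i) | ∀ v ∈ chk, pair m v = -1}) :
    -- σ = σ̌₁* + ⋯ + σ̌_r*, where σ is the face of Δ dual to σ*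
    {m ∈ Δ | ∀ v ∈ σs, pair m v = -1}
      = ∑ i, {m ∈ chks | supp (Nb i) m = 1} := by
  classical
  obtain ⟨⟨SΔ, hSΔlat, hSΔ⟩, h0int, hlat2⟩ := hΔrefl
  have h0Δ : (0 : V n) ∈ Δ := interior_subset h0int
  -- degenerate case n = 0
  rcases Nat.eq_zero_or_pos n with hn0 | hn
  · subst hn0
    have hsub : ∀ x y : V 0, x = y := fun x y => funext fun i => absurd i.isLt (by omega)
    have hpolar : polar Δ = Set.univ := by
      apply Set.eq_univ_of_forall
      intro v m hm
      show (-1 : ℝ) ≤ pair m v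
      have h : pair m v = 0 := by simp [pair]
      rw [h]; norm_num
    have hσs : σs = ∅ := by
      rcases Set.eq_empty_or_nonempty σs with h | ⟨x, hx⟩
      · exact h
      · exfalso
        apply hproper
        rw [hpolar]
        apply Set.eq_univ_of_forall
        intro y; rw [hsub y x]; exact hx
    rcases Nat.eq_zero_or_pos r with hr0 | hr
    · subst hr0
      have hΔ0 : Δ = 0 := by rw [hΔ]; simp
      ext x
      simp only [Set.mem_setOf_eq, hσs, Set.mem_empty_iff_false, false_implies, implies_true,
        and_true, hΔ0, Finset.univ_eq_empty, Finset.sum_empty]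
    · exfalso
      obtain ⟨x, hx⟩ := hchkne
      rw [hchkdef] at hx
      obtain ⟨g, hg, -⟩ := (Set.mem_fintype_sum _ _).1 hx
      have h := (hg ⟨0, hr⟩).1
      rw [hσs] at h
      exact h
  rcases Nat.eq_zero_or_pos r with hr0 | hr
  · exfalso
    subst hr0
    have hΔ0 : Δ = 0 := by rw [hΔ]; simp
    rw [mem_interior] at h0int
    obtain ⟨t, hts, hto, h0t⟩ := h0int
    obtain ⟨ε, hε, hball⟩ := Metric.isOpen_iff.1 hto 0 h0t
    set p : V n := (ε / 2) • (Pi.single ⟨0, hn⟩ (1:ℝ) : V n) with hp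
    have hpb : p ∈ Metric.ball (0 : V n) ε := by
      rw [mem_ball_zero_iff]
      have h1 : ‖(Pi.single ⟨0, hn⟩ (1:ℝ) : V n)‖ ≤ 1 := by
        apply (pi_norm_le_iff_of_nonneg zero_le_one).2
        intro i
        rw [Pi.single_apply]
        split_ifs <;> simp
      rw [norm_smul]
      have h2 : ‖(ε/2 : ℝ)‖ = ε/2 := by rw [Real.norm_eq_abs, abs_of_pos (by linarith)]
      rw [h2]
      nlinarith
    have hpΔ : p ∈ Δ := hts (hball hpb)
    rw [hΔ0] at hpΔ
    have hp0 : p = 0 := Set.mem_zero.1 hpΔ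
    have hcoord := congrFun hp0 ⟨0, hn⟩
    rw [hp] at hcoord
    simp only [Pi.smul_apply, Pi.single_eq_same, smul_eq_mul, mul_one, Pi.zero_apply] at hcoord
    linarith
  -- ### main case : 0 < n, 0 < r
  have hnR : (0:ℝ) < n := by exact_mod_cast hn
  have hΔconv : Convex ℝ Δ := hSΔ ▸ convex_convexHull ℝ _
  have hΔcomp : IsCompact Δ := hSΔ ▸ SΔ.finite_toSet.isCompact_convexHull (𝕜 := ℝ)
  have hΔcl : IsClosed Δ := hΔcomp.isClosed
  have hDcomp : ∀ i, IsCompact (D i) := fun i => by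
    obtain ⟨S, -, hS⟩ := hDlat i; exact hS ▸ S.finite_toSet.isCompact_convexHull (𝕜 := ℝ)
  have h0sum : (0 : V n) ∈ ∑ i, D i := hΔ ▸ h0Δ
  obtain ⟨gD, hgD, hgDsum⟩ := (Set.mem_fintype_sum _ _).1 h0sum
  have hDne : ∀ i, (D i).Nonempty := fun i => ⟨gD i, hgD i⟩
  have hφsum : ∀ v, supp Δ v = ∑ i, supp (D i) v := fun v => by
    rw [hΔ]; exact supp_finsetSum _ _ (fun i _ => hDcomp i) (fun i _ => hDne i) v
  have hΔscl : IsClosed (polar Δ) := polar_isClosed Δ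
  have hΔsconv : Convex ℝ (polar Δ) := polar_convex Δ
  obtain ⟨ε, hε, hball⟩ : ∃ ε > 0, Metric.ball (0 : V n) ε ⊆ Δ := by
    rw [mem_interior_iff_mem_nhds] at h0int
    exact Metric.mem_nhds_iff.1 h0int
  have hsingle_norm : ∀ (k : Fin n), ‖(Pi.single k (1:ℝ) : V n)‖ ≤ 1 := by
    intro k
    apply (pi_norm_le_iff_of_nonneg zero_le_one).2
    intro i; rw [Pi.single_apply]; split_ifs <;> simp
  have hsingle_mem : ∀ (k : Fin n) (c : ℝ), |c| < ε → (c • (Pi.single k (1:ℝ) : V n)) ∈ Δ := by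
    intro k c hc
    apply hball
    rw [mem_ball_zero_iff, norm_smul, Real.norm_eq_abs]
    calc |c| * ‖(Pi.single k (1:ℝ) : V n)‖ ≤ |c| * 1 :=
          mul_le_mul_of_nonneg_left (hsingle_norm k) (abs_nonneg c)
      _ = |c| := mul_one _
      _ < ε := hc
  have hpair_single : ∀ (k : Fin n) (c : ℝ) (v : V n),
      pair (c • (Pi.single k (1:ℝ) : V n)) v = c * v k := by
    intro k c v
    rw [pair_smul_left]
    congr 1
    simp [pair, Pi.single_apply]
  have hΔsbdd : ∀ v ∈ polar Δ, ‖v‖ ≤ 2 / ε := by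
    intro v hv
    apply (pi_norm_le_iff_of_nonneg (by positivity)).2
    intro k
    rw [Real.norm_eq_abs, abs_le]
    constructor
    · have h1 := hv _ (hsingle_mem k (ε/2) (by rw [abs_of_pos (by linarith)]; linarith))
      rw [hpair_single] at h1
      rw [neg_le, le_div_iff₀ hε]
      nlinarith
    · have h1 := hv _ (hsingle_mem k (-(ε/2)) (by rw [abs_neg, abs_of_pos (by linarith)]; linarith))
      rw [hpair_single] at h1
      rw [le_div_iff₀ hε]
      nlinarith
  have hΔscomp : IsCompact (polar Δ) :=
    Metric.isCompact_of_isClosed_isBounded hΔscl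
      (isBounded_iff_forall_norm_le.2 ⟨2/ε, hΔsbdd⟩)
  have hKM : polar Δ = convexHull ℝ (E : Set (V n)) := by
    have h1 := closure_convexHull_extremePoints hΔscomp hΔsconv
    rw [← hE] at h1
    rw [IsClosed.closure_eq (E.finite_toSet.isCompact_convexHull (𝕜 := ℝ)).isClosed] at h1
    exact h1.symm
  have hEsub : (E : Set (V n)) ⊆ polar Δ := by
    rw [hE]; exact extremePoints_subset
  -- 0 is in the interior of the polar
  obtain ⟨C, hC⟩ := isBounded_iff_forall_norm_le.1 hΔcomp.isBounded
  have hC0 : 0 ≤ C := le_trans (norm_nonneg _) (hC 0 h0Δ)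
  have hpol_ball : ∀ v : V n, ‖v‖ < 1/(n*(C+1)) → v ∈ polar Δ := by
    intro v hv m hm
    have h1 : |pair m v| ≤ (n*(C+1)) * ‖v‖ := by
      calc |∑ i, m i * v i| ≤ ∑ i, |m i * v i| := Finset.abs_sum_le_sum_abs _ _
        _ ≤ ∑ _i : Fin n, (C+1) * ‖v‖ := by
            apply Finset.sum_le_sum
            intro i _
            rw [abs_mul]
            have hm1 : |m i| ≤ C + 1 := by
              have := norm_le_pi_norm m i
              rw [Real.norm_eq_abs] at this
              have := hC m hm
              linarith [norm_le_pi_norm m i]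
            have hv1 : |v i| ≤ ‖v‖ := by
              have := norm_le_pi_norm v i
              rwa [Real.norm_eq_abs] at this
            exact mul_le_mul hm1 hv1 (abs_nonneg _) (by linarith)
        _ = n * ((C+1) * ‖v‖) := by
            rw [Finset.sum_const, Finset.card_univ, Fintype.card_fin, nsmul_eq_mul]
        _ = (n*(C+1)) * ‖v‖ := by ring
    have h2 : (n*(C+1)) * ‖v‖ < 1 := by
      have hpos : (0:ℝ) < n*(C+1) := by nlinarith
      calc (n*(C+1)) * ‖v‖ < (n*(C+1)) * (1/(n*(C+1))) := by
            exact mul_lt_mul_of_pos_left hv hpos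
        _ = 1 := by field_simp
    have h3 := abs_le.1 (le_of_lt (lt_of_le_of_lt h1 h2))
    have : -1 ≤ pair m v := h3.1
    exact this
  have h0intΔs : (0 : V n) ∈ interior (polar Δ) := by
    rw [mem_interior]
    refine ⟨Metric.ball 0 (1/(n*(C+1))), fun v hv => hpol_ball v (mem_ball_zero_iff.1 hv),
      Metric.isOpen_ball, Metric.mem_ball_self (by positivity)⟩
  have hext_ne0 : ∀ e ∈ E, e ≠ (0 : V n) := by
    intro e he he0
    have hext : e ∈ Set.extremePoints ℝ (polar Δ) := by rw [← hE]; exact he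
    rw [mem_extremePoints] at hext
    obtain ⟨δ, hδ, hball2⟩ : ∃ δ > 0, Metric.ball (0 : V n) δ ⊆ polar Δ := by
      rw [mem_interior_iff_mem_nhds] at h0intΔs
      exact Metric.mem_nhds_iff.1 h0intΔs
    set u : V n := (δ/2) • (Pi.single ⟨0, hn⟩ (1:ℝ) : V n) with hu
    have hunorm : ‖u‖ < δ := by
      rw [hu, norm_smul, Real.norm_eq_abs, abs_of_pos (by linarith)]
      nlinarith [hsingle_norm ⟨0, hn⟩]
    have hu1 : u ∈ polar Δ := hball2 (mem_ball_zero_iff.2 hunorm)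
    have hu2 : -u ∈ polar Δ := hball2 (mem_ball_zero_iff.2 (by rwa [norm_neg]))
    have hseg : e ∈ openSegment ℝ u (-u) := by
      refine ⟨1/2, 1/2, by norm_num, by norm_num, by norm_num, ?_⟩
      rw [he0, smul_neg, add_neg_cancel]
    have hue := (hext.2 u hu1 (-u) hu2 hseg).1
    have hcoord := congrFun (hue.trans he0) ⟨0, hn⟩
    rw [hu] at hcoord
    simp only [Pi.smul_apply, Pi.single_eq_same, smul_eq_mul, mul_one, Pi.zero_apply] at hcoord
    linarith
  have hφle1 : ∀ v ∈ polar Δ, supp Δ v ≤ 1 := fun v hv =>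
    supp_le ⟨0, h0Δ⟩ (fun m hm => by linarith [hv m hm])
  have hφeE : ∀ e ∈ E, supp Δ e = 1 := by
    intro e he
    have heΔs : e ∈ polar Δ := hEsub he
    have hle := hφle1 e heΔs
    have hpos : 0 < supp Δ e := by
      have hne0 := hext_ne0 e he
      have hk : ∃ k, e k ≠ 0 := by
        by_contra h; push_neg at h; exact hne0 (funext h)
      obtain ⟨k, hk⟩ := hk
      have hpp : 0 < pair e e := by
        apply Finset.sum_pos' (fun i _ => mul_self_nonneg (e i))
        exact ⟨k, Finset.mem_univ k, mul_self_pos.2 hk⟩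
      set t : ℝ := ε / (2 * (‖e‖ + 1)) with ht
      have ht0 : 0 < t := by positivity
      have hmem : (-t) • e ∈ Δ := by
        apply hball
        rw [mem_ball_zero_iff, norm_smul, Real.norm_eq_abs, abs_neg, abs_of_pos ht0]
        rw [ht]
        rw [div_mul_eq_mul_div, div_lt_iff₀ (by positivity)]
        nlinarith [norm_nonneg e]
      have hb := neg_pair_le_supp hΔcomp hmem e
      rw [pair_smul_left] at hb
      nlinarith
    rcases lt_or_eq_of_le hle with hlt | heq
    · exfalso
      set c := supp Δ e with hc
      have hc0 : 0 < c := hpos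
      have hmemu : c⁻¹ • e ∈ polar Δ := by
        intro m hm
        rw [pair_comm, pair_smul_left, pair_comm e m]
        have h1 : -(pair m e) ≤ c := neg_pair_le_supp hΔcomp hm e
        have h2 : -c ≤ pair m e := by linarith
        calc (-1 : ℝ) = c⁻¹ * (-c) := by field_simp
          _ ≤ c⁻¹ * pair m e := by
              apply mul_le_mul_of_nonneg_left h2 (by positivity)
      have hext : e ∈ Set.extremePoints ℝ (polar Δ) := by rw [← hE]; exact he
      rw [mem_extremePoints] at hext
      have hseg : e ∈ openSegment ℝ (c⁻¹ • e) 0 := by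
        refine ⟨c, 1 - c, hc0, by linarith, by ring, ?_⟩
        rw [smul_smul, mul_inv_cancel₀ (ne_of_gt hc0), one_smul, smul_zero, add_zero]
      have h02 := (hext.2 _ hmemu _ (zero_mem_polar Δ) hseg).2
      exact hext_ne0 e he h02.symm
    · exact heq
  have hnonnegE : ∀ i, ∀ e ∈ E, 0 ≤ supp (D i) e := fun i e he => by
    rcases hnef i e he with h | h <;> rw [h] <;> norm_num
  have hsumE : ∀ e ∈ E, ∑ i, supp (D i) e = 1 := fun e he => by
    rw [← hφsum]; exact hφeE e he
  have hexists1 : ∀ e ∈ E, ∃ i, supp (D i) e = 1 := by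
    intro e he
    by_contra h; push_neg at h
    have h0 : ∀ i, supp (D i) e = 0 := fun i => (hnef i e he).resolve_right (h i)
    have hs := hsumE e he
    rw [Finset.sum_eq_zero (fun i _ => h0 i)] at hs
    norm_num at hs
  have hother0 : ∀ e ∈ E, ∀ i j, supp (D i) e = 1 → j ≠ i → supp (D j) e = 0 := by
    intro e he i j hi hj
    have hsum := hsumE e he
    rw [← Finset.add_sum_erase _ _ (Finset.mem_univ i), hi] at hsum
    have h0 : ∑ k ∈ Finset.univ.erase i, supp (D k) e = 0 := by linarith
    exact (Finset.sum_eq_zero_iff_of_nonneg (fun k _ => hnonnegE k e he)).1 h0 j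
      (Finset.mem_erase.2 ⟨hj, Finset.mem_univ j⟩)
  -- Nb facts
  have hGfin : ∀ i, ({0} ∪ {e : V n | e ∈ E ∧ supp (D i) e = 1} : Set (V n)).Finite := fun i =>
    (Set.finite_singleton 0).union (E.finite_toSet.subset (fun x hx => hx.1))
  have hNbcomp : ∀ i, IsCompact (Nb i) := fun i => by
    rw [hNb i]; exact (hGfin i).isCompact_convexHull (𝕜 := ℝ)
  have h0Nb : ∀ i, (0 : V n) ∈ Nb i := fun i => by
    rw [hNb i]
    exact subset_convexHull ℝ _ (Or.inl rfl)
  have hNbne : ∀ i, (Nb i).Nonempty := fun i => ⟨0, h0Nb i⟩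
  have hgenNb : ∀ i, ∀ e ∈ E, supp (D i) e = 1 → e ∈ Nb i := fun i e he h1 => by
    rw [hNb i]; exact subset_convexHull ℝ _ (Or.inr ⟨he, h1⟩)
  have hF3 : ∀ i j, ∀ m ∈ D i, ∀ u ∈ Nb j, -(if i = j then (1:ℝ) else 0) ≤ pair m u := by
    intro i j m hm u hu
    rw [hNb j] at hu
    rw [pair_comm]
    refine hull_pair_ge ?_ u hu
    rintro x (rfl | ⟨hxE, hx1⟩)
    · rw [pair_zero_left]
      split_ifs <;> norm_num
    · rw [pair_comm]
      by_cases hij : i = j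
      · subst hij; rw [if_pos rfl]
        have hb := neg_pair_le_supp (hDcomp i) hm x
        rw [hx1] at hb
        linarith
      · rw [if_neg hij]
        have h0 := hother0 x hxE j i hx1 hij
        have hb := neg_pair_le_supp (hDcomp i) hm x
        rw [h0] at hb
        linarith
  -- convexity bound and equality structure
  have hconvbound : ∀ i (w : V n → ℝ) (v : V n), (∀ y ∈ E, 0 ≤ w y) →
      ((∑ y ∈ E, w y • y) = v) → supp (D i) v ≤ ∑ y ∈ E, w y * supp (D i) y := by
    intro i w v hw0 hwv
    apply supp_le (hDne i)
    intro m hm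
    have h1 : pair m v = ∑ y ∈ E, w y * pair m y := by
      rw [pair_comm, ← hwv, pair_sum_left]
      apply Finset.sum_congr rfl
      intro y _
      rw [pair_smul_left, pair_comm]
    calc -(pair m v) = ∑ y ∈ E, w y * (-(pair m y)) := by
          rw [h1, ← Finset.sum_neg_distrib]
          apply Finset.sum_congr rfl; intro y _; ring
      _ ≤ ∑ y ∈ E, w y * supp (D i) y :=
          Finset.sum_le_sum fun y hy =>
            mul_le_mul_of_nonneg_left (neg_pair_le_supp (hDcomp i) hm y) (hw0 y hy)
  have hstruct : ∀ v ∈ polar Δ, supp Δ v = 1 → ∀ w : V n → ℝ, (∀ y ∈ E, 0 ≤ w y) →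
      ((∑ y ∈ E, w y) = 1) → ((∑ y ∈ E, w y • y) = v) →
      ∀ i, supp (D i) v = ∑ y ∈ E, w y * supp (D i) y := by
    intro v hv h1 w hw0 hw1 hwv
    have hle : ∀ i, supp (D i) v ≤ ∑ y ∈ E, w y * supp (D i) y :=
      fun i => hconvbound i w v hw0 hwv
    have hLHS : ∑ i, supp (D i) v = 1 := by rw [← hφsum v, h1]
    have hRHS : ∑ i, ∑ y ∈ E, w y * supp (D i) y = 1 := by
      rw [Finset.sum_comm]
      calc ∑ y ∈ E, ∑ i, w y * supp (D i) y = ∑ y ∈ E, w y * supp Δ y := by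
            apply Finset.sum_congr rfl; intro y _; rw [← Finset.mul_sum, ← hφsum]
        _ = ∑ y ∈ E, w y := by
            apply Finset.sum_congr rfl; intro y hy; rw [hφeE y hy, mul_one]
        _ = 1 := hw1
    have hsum_eq : ∑ i, supp (D i) v = ∑ i, ∑ y ∈ E, w y * supp (D i) y :=
      hLHS.trans hRHS.symm
    exact fun i => ((Finset.sum_eq_sum_iff_of_le (fun i _ => hle i)).1 hsum_eq) i (Finset.mem_univ i)
  have hrep : ∀ v ∈ polar Δ, ∃ w : V n → ℝ, (∀ y ∈ E, 0 ≤ w y) ∧ ((∑ y ∈ E, w y) = 1) ∧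
      ((∑ y ∈ E, w y • y) = v) := by
    intro v hv
    have hmem : v ∈ convexHull ℝ (E : Set (V n)) := by rw [← hKM]; exact hv
    obtain ⟨w, hw0, hw1, hwv⟩ := Finset.mem_convexHull'.1 hmem
    exact ⟨w, hw0, hw1, hwv⟩
  have hnonneg1 : ∀ v ∈ polar Δ, supp Δ v = 1 → ∀ i, 0 ≤ supp (D i) v := by
    intro v hv h1 i
    obtain ⟨w, hw0, hw1, hwv⟩ := hrep v hv
    rw [hstruct v hv h1 w hw0 hw1 hwv i]
    exact Finset.sum_nonneg fun y hy => mul_nonneg (hw0 y hy) (hnonnegE i y hy)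
  have hzero1 : ∀ v ∈ polar Δ, supp Δ v = 1 → ∀ i j, supp (D i) v = 1 → j ≠ i →
      supp (D j) v = 0 := by
    intro v hv h1 i j hi hj
    have hsum : ∑ k, supp (D k) v = 1 := by rw [← hφsum, h1]
    rw [← Finset.add_sum_erase _ _ (Finset.mem_univ i), hi] at hsum
    have h0 : ∑ k ∈ Finset.univ.erase i, supp (D k) v = 0 := by linarith
    exact (Finset.sum_eq_zero_iff_of_nonneg (fun k _ => hnonneg1 v hv h1 k)).1 h0 j
      (Finset.mem_erase.2 ⟨hj, Finset.mem_univ j⟩)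
  have hKey : ∀ v ∈ polar Δ, supp Δ v = 1 → ∀ i, ∀ mi ∈ D i, pair mi v = -1 →
      supp (D i) v = 1 → ∃ e ∈ E, supp (D i) e = 1 ∧ pair mi e = -1 := by
    intro v hv h1 i mi hmi hpair hφi
    obtain ⟨w, hw0, hw1, hwv⟩ := hrep v hv
    have hst := hstruct v hv h1 w hw0 hw1 hwv i
    have hpv : pair mi v = ∑ y ∈ E, w y * pair mi y := by
      rw [pair_comm, ← hwv, pair_sum_left]
      apply Finset.sum_congr rfl; intro y _; rw [pair_smul_left, pair_comm]
    have hzero : ∑ y ∈ E, w y * (pair mi y + supp (D i) y) = 0 := by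
      have hsplit : ∑ y ∈ E, w y * (pair mi y + supp (D i) y)
          = (∑ y ∈ E, w y * pair mi y) + ∑ y ∈ E, w y * supp (D i) y := by
        rw [← Finset.sum_add_distrib]
        apply Finset.sum_congr rfl; intro y _; ring
      rw [hsplit, ← hpv, ← hst, hpair, hφi]; ring
    have hterm0 : ∀ y ∈ E, w y * (pair mi y + supp (D i) y) = 0 :=
      (Finset.sum_eq_zero_iff_of_nonneg (fun y hy => mul_nonneg (hw0 y hy)
        (by linarith [neg_pair_le_supp (hDcomp i) hmi y]))).1 hzero
    have hsne : (∑ y ∈ E, w y * supp (D i) y) ≠ 0 := by rw [← hst, hφi]; norm_num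
    obtain ⟨y, hyE, hyne⟩ := Finset.exists_ne_zero_of_sum_ne_zero hsne
    have hwy : w y ≠ 0 := fun h => hyne (by rw [h, zero_mul])
    have hφy : supp (D i) y = 1 := by
      rcases hnef i y hyE with h | h
      · exact absurd (by rw [h, mul_zero]) hyne
      · exact h
    have hay : pair mi y + supp (D i) y = 0 := by
      rcases mul_eq_zero.1 (hterm0 y hyE) with h | h
      · exact absurd h hwy
      · exact h
    exact ⟨y, hyE, hφy, by rw [hφy] at hay; linarith⟩
  -- the face σs
  have hσsub : σs ⊆ polar Δ := hface.subset
  obtain ⟨w₀, hw₀⟩ := hchkne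
  rw [hchkdef] at hw₀
  obtain ⟨gσ, hgσ, hgσsum⟩ := (Set.mem_fintype_sum _ _).1 hw₀
  have hgσs : ∀ i, gσ i ∈ σs := fun i => (hgσ i).1
  have hgσ1 : ∀ i, supp (D i) (gσ i) = 1 := fun i => (hgσ i).2
  have hσne : σs.Nonempty := ⟨gσ ⟨0, hr⟩, hgσs _⟩
  have hσcl : IsClosed σs := hface.isClosed hΔscl
  have hσcomp : IsCompact σs := hΔscomp.of_isClosed_subset hσcl hσsub
  have hσconv : Convex ℝ σs := hface.convex hΔsconv
  have hσKM : σs ⊆ closure (convexHull ℝ (σs.extremePoints ℝ)) := by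
    rw [closure_convexHull_extremePoints hσcomp hσconv]
  have hextE : σs.extremePoints ℝ ⊆ (E : Set (V n)) := by
    rw [hE]; exact hface.isExtreme.extremePoints_subset_extremePoints
  have hB : ∀ (mm : Fin r → V n), (∀ i, mm i ∈ D i) → ∀ v ∈ σs,
      pair (∑ i, mm i) v = -1 →
      supp Δ v = 1 ∧ ∀ i, pair (mm i) v = -(supp (D i) v) := by
    intro mm hmm v hv hpv
    have hvΔs : v ∈ polar Δ := hσsub hv
    have hsum : ∑ i, pair (mm i) v = -1 := by rw [← pair_sum_left]; exact hpv
    have hlow : ∀ i, -(supp (D i) v) ≤ pair (mm i) v := fun i => by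
      linarith [neg_pair_le_supp (hDcomp i) (hmm i) v]
    have h1 : ∑ i, -(supp (D i) v) ≤ -1 :=
      le_trans (Finset.sum_le_sum fun i _ => hlow i) (le_of_eq hsum)
    have h2 : -(supp Δ v) = ∑ i, -(supp (D i) v) := by
      rw [hφsum v, ← Finset.sum_neg_distrib]
    have h3 : -1 ≤ -(supp Δ v) := by linarith [hφle1 v hvΔs]
    have hφv : supp Δ v = 1 := by rw [h2] at h3; linarith
    have heqsum : ∑ i, -(supp (D i) v) = ∑ i, pair (mm i) v := by
      rw [← h2, hφv, hsum]
    refine ⟨hφv, fun i => ?_⟩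
    have heach := (Finset.sum_eq_sum_iff_of_le (fun i _ => hlow i)).1 heqsum i (Finset.mem_univ i)
    linarith [heach]
  -- ## the two inclusions
  apply Set.Subset.antisymm
  · rintro m ⟨hmΔ, hmσ⟩
    have hm' : m ∈ ∑ i, D i := by rw [← hΔ]; exact hmΔ
    obtain ⟨mm, hmm, hmmsum⟩ := (Set.mem_fintype_sum _ _).1 hm'
    have hBv : ∀ v ∈ σs, supp Δ v = 1 ∧ ∀ i, pair (mm i) v = -(supp (D i) v) :=
      fun v hv => hB mm hmm v hv (by rw [hmmsum]; exact hmσ v hv)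
    have hφδ : ∀ i j, ∀ v ∈ σs, supp (D j) v = 1 →
        pair (mm i) v = -(if i = j then (1:ℝ) else 0) := by
      intro i j v hv hj
      obtain ⟨hφv, hpv⟩ := hBv v hv
      rw [hpv i]
      by_cases hij : i = j
      · subst hij; rw [hj, if_pos rfl]
      · rw [if_neg hij, hzero1 v (hσsub hv) hφv j i hj hij, neg_zero]
    apply (Set.mem_fintype_sum _ _).2
    refine ⟨mm, fun i => ?_, hmmsum⟩
    have hiNbs : mm i ∈ polar (∑ j, Nb j) := by
      intro u hu
      obtain ⟨gu, hgu, hgusum⟩ := (Set.mem_fintype_sum _ _).1 hu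
      rw [← hgusum, pair_sum_left]
      have hbd : ∀ j, -(if i = j then (1:ℝ) else 0) ≤ pair (gu j) (mm i) := fun j => by
        rw [pair_comm]; exact hF3 i j (mm i) (hmm i) (gu j) (hgu j)
      calc (-1 : ℝ) = ∑ j, -(if i = j then (1:ℝ) else 0) := by
            rw [Finset.sum_neg_distrib]
            simp
        _ ≤ ∑ j, pair (gu j) (mm i) := Finset.sum_le_sum fun j _ => hbd j
    have hichk : ∀ v ∈ chk, pair (mm i) v = -1 := by
      intro v hv
      rw [hchkdef] at hv
      obtain ⟨gv, hgv, hgvsum⟩ := (Set.mem_fintype_sum _ _).1 hv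
      rw [← hgvsum, pair_comm, pair_sum_left]
      have hterm : ∀ j, pair (gv j) (mm i) = -(if i = j then (1:ℝ) else 0) := fun j => by
        rw [pair_comm]; exact hφδ i j (gv j) (hgv j).1 (hgv j).2
      rw [Finset.sum_congr rfl (fun j _ => hterm j), Finset.sum_neg_distrib]
      simp
    have hsupNb : supp (Nb i) (mm i) = 1 := by
      apply le_antisymm
      · apply supp_le (hNbne i)
        intro u hu
        have hb := hF3 i i (mm i) (hmm i) u hu
        rw [if_pos rfl] at hb
        rw [pair_comm u (mm i)]
        linarith
      · obtain ⟨hφg, hpg⟩ := hBv (gσ i) (hgσs i)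
        have hpgi : pair (mm i) (gσ i) = -1 := by rw [hpg i, hgσ1 i]
        obtain ⟨e, heE, heφ, hepair⟩ :=
          hKey (gσ i) (hσsub (hgσs i)) hφg i (mm i) (hmm i) hpgi (hgσ1 i)
        have heNb : e ∈ Nb i := hgenNb i e heE heφ
        have hb := neg_pair_le_supp (hNbcomp i) heNb (mm i)
        have h2 : pair e (mm i) = -1 := by rw [pair_comm]; exact hepair
        rw [h2] at hb
        linarith
    exact ⟨by rw [hchks]; exact ⟨hiNbs, hichk⟩, hsupNb⟩
  · intro m hm
    obtain ⟨mm, hmm, hmmsum⟩ := (Set.mem_fintype_sum _ _).1 hm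
    have hmmchks : ∀ i, mm i ∈ chks := fun i => (hmm i).1
    have hmmNb : ∀ i, supp (Nb i) (mm i) = 1 := fun i => (hmm i).2
    have hmmpolar : ∀ i, mm i ∈ polar (∑ j, Nb j) := fun i => by
      have h := hmmchks i; rw [hchks] at h; exact h.1
    have hmmchk : ∀ i, ∀ v ∈ chk, pair (mm i) v = -1 := fun i => by
      have h := hmmchks i; rw [hchks] at h; exact h.2
    have hvert : ∀ e ∈ E, ∀ i, -(supp (D i) e) ≤ pair e (mm i) := by
      intro e heE i
      rcases hnef i e heE with h0 | h1
      · rw [h0, neg_zero]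
        obtain ⟨i₀, hi₀⟩ := hexists1 e heE
        have hne : i ≠ i₀ := fun h => by rw [h, hi₀] at h0; norm_num at h0
        have hkey : ∀ u ∈ Nb i, -(1:ℝ) ≤ pair u (mm i) + pair e (mm i) := by
          intro u hu
          have hmem : u + e ∈ ∑ j, Nb j := by
            apply (Set.mem_fintype_sum _ _).2
            refine ⟨fun j => (if j = i then u else 0) + (if j = i₀ then e else 0),
              fun j => ?_, ?_⟩
            · show (if j = i then u else 0) + (if j = i₀ then e else 0) ∈ Nb j
              by_cases hji : j = i
              · subst hji
                rw [if_pos rfl, if_neg hne, add_zero]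
                exact hu
              · rw [if_neg hji]
                by_cases hji0 : j = i₀
                · subst hji0; rw [if_pos rfl, zero_add]; exact hgenNb _ e heE hi₀
                · rw [if_neg hji0, add_zero]; exact h0Nb j
            · rw [Finset.sum_add_distrib]
              simp
          have hp := hmmpolar i (u + e) hmem
          rw [pair_add_left] at hp
          exact hp
        have hsup : supp (Nb i) (mm i) ≤ 1 + pair e (mm i) := by
          apply supp_le (hNbne i)
          intro u hu
          linarith [hkey u hu]
        rw [hmmNb i] at hsup
        linarith
      · rw [h1]
        have hmem : e ∈ ∑ j, Nb j := by
          apply (Set.mem_fintype_sum _ _).2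
          refine ⟨fun j => if j = i then e else 0, fun j => ?_, by simp⟩
          show (if j = i then e else 0) ∈ Nb j
          by_cases hji : j = i
          · subst hji; rw [if_pos rfl]; exact hgenNb _ e heE h1
          · rw [if_neg hji]; exact h0Nb j
        linarith [hmmpolar i e hmem]
    have hmΔ : m ∈ Δ := by
      rw [← bipolar hΔconv hΔcl h0Δ]
      intro v hv
      have hvhull : v ∈ convexHull ℝ (E : Set (V n)) := by rw [← hKM]; exact hv
      refine hull_pair_ge ?_ v hvhull
      intro e heE'
      have heE : e ∈ E := heE'
      have hrw : pair e m = ∑ i, pair (mm i) e := by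
        rw [pair_comm, ← hmmsum, pair_sum_left]
      rw [hrw]
      calc (-1 : ℝ) = -(supp Δ e) := by rw [hφeE e heE]
        _ = ∑ i, -(supp (D i) e) := by rw [hφsum, ← Finset.sum_neg_distrib]
        _ ≤ ∑ i, pair (mm i) e := Finset.sum_le_sum fun i _ => by
              rw [pair_comm]; exact hvert e heE i
    have hfaceeq : ∀ v ∈ σs, pair m v = -1 := by
      have hexts : ∀ e ∈ σs.extremePoints ℝ, pair m e = -1 := by
        intro e he
        have heE : e ∈ E := hextE he
        have heσ : e ∈ σs := extremePoints_subset he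
        obtain ⟨i₀, hi₀⟩ := hexists1 e heE
        set g : Fin r → V n := fun j => if j = i₀ then e else gσ j with hg
        have hgmem : ∀ j, g j ∈ {v ∈ σs | supp (D j) v = 1} := by
          intro j
          rw [hg]
          by_cases hj : j = i₀
          · subst hj; simp only [if_pos rfl]; exact ⟨heσ, hi₀⟩
          · simp only [if_neg hj]; exact ⟨hgσs j, hgσ1 j⟩
        have hw' : (∑ j, g j) ∈ chk := by
          rw [hchkdef]
          exact (Set.mem_fintype_sum _ _).2 ⟨g, hgmem, rfl⟩
        have h2 : pair m (∑ j, g j) = -(r : ℝ) := by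
          rw [← hmmsum, pair_sum_left]
          rw [Finset.sum_congr rfl (fun i _ => hmmchk i _ hw')]
          simp
        have h3 : pair m (∑ j, g j) = ∑ j, pair m (g j) := by
          rw [pair_comm, pair_sum_left]
          apply Finset.sum_congr rfl; intro j _; rw [pair_comm]
        have hge : ∀ j, -1 ≤ pair m (g j) := fun j => (hσsub (hgmem j).1) m hmΔ
        have hsums : (∑ _j : Fin r, (-1:ℝ)) = ∑ j, pair m (g j) := by
          rw [← h3, h2]
          simp
        have heach := (Finset.sum_eq_sum_iff_of_le (fun j _ => hge j)).1 hsums i₀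
          (Finset.mem_univ i₀)
        rw [hg] at heach
        simp only [if_pos rfl] at heach
        exact heach.symm
      intro v hv
      have hvc := hσKM hv
      have hsubT : closure (convexHull ℝ (σs.extremePoints ℝ)) ⊆ {x : V n | pair x m = -1} := by
        apply closure_minimal
        · apply convexHull_min
          · intro e he
            rw [Set.mem_setOf_eq, pair_comm]
            exact hexts e he
          · exact convex_hyperplane (isLinearMap_pair_left m) (-1)
        · exact isClosed_eq (continuous_pair_left m) continuous_const
      have hmem := hsubT hvc
      rw [Set.mem_setOf_eq] at hmem
      rw [pair_comm]; exact hmem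
    exact ⟨hmΔ, hfaceeq⟩

end BB
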